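/- arXiv:1104.0359 — 2 statements merged into one kernel-verified Lean document; each statement's English description precedes it below -/
import Mathlib

section
/- Let non-negative random variables L \in RV_{-\beta} and S \in RV_{-\beta} (equal tail indices, \beta > 0) satisfy the negligible joint tail condition. Let U be a random variable with distribution function F_U(x) = (F_L(x) + F_S(x))/2. Then VaR_\alpha(L + S) \sim VaR_{1 - (1-\alpha)/2}(U) as \alpha \to 1. -/
open MeasureTheory ProbabilityTheory Filter Topology

/-- Tail probability function of a random variable. -/
noncomputable def tail {Ω : Type*} [MeasurableSpace Ω] (P : Measure Ω) (X : Ω → ℝ) (x : ℝ) : ℝ :=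
  (P {ω | x < X ω}).toReal

/-- Distribution function of a random variable. -/
noncomputable def cdf' {Ω : Type*} [MeasurableSpace Ω] (P : Measure Ω) (X : Ω → ℝ) (x : ℝ) : ℝ :=
  (P {ω | X ω ≤ x}).toReal

/-- Value at Risk: the α-quantile. -/
noncomputable def VaR {Ω : Type*} [MeasurableSpace Ω] (P : Measure Ω) (X : Ω → ℝ) (α : ℝ) : ℝ :=
  sInf {x : ℝ | α ≤ cdf' P X x}

/-- f is regularly varying (at infinity) with index k. -/
def RegVary (f : ℝ → ℝ) (k : ℝ) : Prop :=
  ∀ t : ℝ, 0 < t → Tendsto (fun x => f (t * x) / f x) atTop (𝓝 (t ^ k))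

section AuxTail
variable {Ω : Type*} [MeasurableSpace Ω] (P : Measure Ω) [IsProbabilityMeasure P] {X : Ω → ℝ}

lemma tail_nonneg (x : ℝ) : 0 ≤ tail P X x := ENNReal.toReal_nonneg

lemma tail_antitone : Antitone (tail P X) := by
  intro u v huv
  exact ENNReal.toReal_mono (measure_ne_top _ _)
    (measure_mono (fun ω h => lt_of_le_of_lt huv h))

lemma cdf'_add_tail (hX : Measurable X) (x : ℝ) : cdf' P X x + tail P X x = 1 := by
  have h : {ω | X ω ≤ x}ᶜ = {ω | x < X ω} := by ext ω; simp [not_le]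
  have h0 := measure_add_measure_compl (μ := P) (s := {ω | X ω ≤ x})
    (measurableSet_le hX measurable_const)
  rw [h, measure_univ] at h0
  have h1 := congrArg ENNReal.toReal h0
  rw [ENNReal.toReal_add (measure_ne_top _ _) (measure_ne_top _ _)] at h1
  simpa [cdf', tail] using h1

lemma tail_tendsto_zero (hX : Measurable X) : Tendsto (tail P X) atTop (𝓝 0) := by
  have hanti := tail_antitone P (X := X)
  have hbdd : BddBelow (Set.range (tail P X)) := ⟨0, by rintro y ⟨x, rfl⟩; exact tail_nonneg P x⟩
  have htend := tendsto_atTop_ciInf hanti hbdd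
  have hseq : Tendsto (fun n : ℕ => tail P X n) atTop (𝓝 0) := by
    have h1 : Tendsto (fun n : ℕ => P {ω | (n : ℝ) < X ω}) atTop
        (𝓝 (P (⋂ n : ℕ, {ω | (n : ℝ) < X ω}))) := by
      apply tendsto_measure_iInter_atTop
        (fun n => (measurableSet_lt measurable_const hX).nullMeasurableSet)
        (fun m n hmn => Set.setOf_subset_setOf.2 fun ω h =>
          lt_of_le_of_lt (by exact_mod_cast Nat.cast_le.2 hmn) h)
        ⟨0, measure_ne_top _ _⟩
    have h2 : (⋂ n : ℕ, {ω | (n : ℝ) < X ω}) = ∅ := by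
      ext ω
      simp only [Set.mem_iInter, Set.mem_setOf_eq, Set.mem_empty_iff_false, iff_false, not_forall,
        not_lt]
      exact exists_nat_ge (X ω)
    rw [h2, measure_empty] at h1
    have := (ENNReal.tendsto_toReal (by norm_num)).comp h1
    simpa [tail, Function.comp_def] using this
  have hinf : ⨅ x, tail P X x = 0 := by
    apply le_antisymm
    · exact ge_of_tendsto hseq (Eventually.of_forall fun n => ciInf_le hbdd _)
    · exact le_ciInf fun x => tail_nonneg P x
  rwa [hinf] at htend

end AuxTail

lemma pos_of_regVary {f : ℝ → ℝ} (hA : Antitone f) (h0 : ∀ x, 0 ≤ f x)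
    {β : ℝ} (hβ : 0 < β) (hRV : RegVary f (-β)) : ∀ x, 0 < f x := by
  intro x
  rcases (h0 x).lt_or_eq with h | h
  · exact h
  exfalso
  have hzero : ∀ y, x ≤ y → f y = 0 := fun y hy => le_antisymm (h ▸ hA hy) (h0 y)
  have heq : (fun y => f (2 * y) / f y) =ᶠ[atTop] (fun _ => (0:ℝ)) := by
    filter_upwards [eventually_ge_atTop x] with y hy
    rw [hzero y hy]
    simp
  have h2 : (2:ℝ) ^ (-β) = 0 :=
    tendsto_nhds_unique (hRV 2 two_pos) (Tendsto.congr' heq.symm tendsto_const_nhds)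
  exact absurd h2 (ne_of_gt (Real.rpow_pos_of_pos two_pos _))

lemma regVary_add {f g : ℝ → ℝ} (hfpos : ∀ x, 0 < f x) (hgpos : ∀ x, 0 < g x)
    {k : ℝ} (hf : RegVary f k) (hg : RegVary g k) : RegVary (fun x => f x + g x) k := by
  intro t ht
  have hF := hf t ht
  have hG := hg t ht
  rw [tendsto_iff_dist_tendsto_zero] at hF hG ⊢
  apply squeeze_zero (fun x => dist_nonneg)
    (g := fun x => dist (f (t*x) / f x) (t ^ k) + dist (g (t*x) / g x) (t ^ k))
  · intro x
    have hfx := hfpos x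
    have hgx := hgpos x
    have hftx := hfpos (t*x)
    have hgtx := hgpos (t*x)
    simp only [Real.dist_eq]
    set c := t ^ k
    have key : (f (t*x) + g (t*x)) / (f x + g x) - c
        = (f x * (f (t*x)/f x - c) + g x * (g (t*x)/g x - c)) / (f x + g x) := by
      field_simp
      ring
    rw [key, abs_div, abs_of_pos (show (0:ℝ) < f x + g x by linarith)]
    rw [div_le_iff₀ (by linarith)]
    calc |f x * (f (t*x)/f x - c) + g x * (g (t*x)/g x - c)|
        ≤ |f x * (f (t*x)/f x - c)| + |g x * (g (t*x)/g x - c)| := abs_add_le _ _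
      _ = f x * |f (t*x)/f x - c| + g x * |g (t*x)/g x - c| := by
          rw [abs_mul, abs_mul, abs_of_pos hfx, abs_of_pos hgx]
      _ ≤ (f x + g x) * |f (t*x)/f x - c| + (f x + g x) * |g (t*x)/g x - c| := by
          have := abs_nonneg (f (t*x)/f x - c)
          have := abs_nonneg (g (t*x)/g x - c)
          nlinarith
      _ = (|f (t*x)/f x - c| + |g (t*x)/g x - c|) * (f x + g x) := by ring
  · simpa using hF.add hG

noncomputable def Qinv (f : ℝ → ℝ) (ε : ℝ) : ℝ := sInf {x | f x ≤ ε}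

section Qinv
variable {f : ℝ → ℝ} {β ε : ℝ}

lemma Qinv_set_nonempty (hf0 : Tendsto f atTop (𝓝 0)) (hε : 0 < ε) :
    {x | f x ≤ ε}.Nonempty := by
  obtain ⟨x, hx⟩ := (hf0.eventually (eventually_le_nhds hε)).exists
  exact ⟨x, hx⟩

lemma le_Qinv (hfa : Antitone f) (hf0 : Tendsto f atTop (𝓝 0)) (hε : 0 < ε) {y : ℝ}
    (hy : ε < f y) : y ≤ Qinv f ε := by
  apply le_csInf (Qinv_set_nonempty hf0 hε)
  intro x hx
  by_contra hxy
  push_neg at hxy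
  exact absurd (le_trans (hfa hxy.le) hx) (not_le.2 hy)

lemma Qinv_mem (hfa : Antitone f) (hf0 : Tendsto f atTop (𝓝 0)) (hε : 0 < ε) {η : ℝ}
    (hη : 0 < η) : f (Qinv f ε + η) ≤ ε := by
  set s := {x | f x ≤ ε} with hs
  have hne := Qinv_set_nonempty hf0 hε (f := f)
  by_cases hbdd : BddBelow s
  · obtain ⟨x, hxs, hxlt⟩ := (csInf_lt_iff hbdd hne).1 (by linarith [lt_add_of_pos_right (sInf s) hη] : sInf s < sInf s + η)
    exact le_trans (hfa hxlt.le) hxs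
  · rw [not_bddBelow_iff] at hbdd
    obtain ⟨x, hxs, hxlt⟩ := hbdd (Qinv f ε + η)
    exact le_trans (hfa hxlt.le) hxs

lemma Qinv_le_of_mem {y : ℝ} (hy : f y ≤ ε) (h0 : 0 ≤ y) : Qinv f ε ≤ y := by
  by_cases hbdd : BddBelow {x | f x ≤ ε}
  · exact csInf_le hbdd hy
  · rw [Qinv, Real.sInf_of_not_bddBelow hbdd]
    exact h0

lemma Qinv_atTop (hfa : Antitone f) (hfpos : ∀ x, 0 < f x)
    (hf0 : Tendsto f atTop (𝓝 0)) : Tendsto (Qinv f) (𝓝[>] (0:ℝ)) atTop := by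
  rw [tendsto_atTop]
  intro M
  have h1 : ∀ᶠ ε in 𝓝[>] (0:ℝ), ε < f M :=
    eventually_nhdsWithin_of_eventually_nhds (eventually_lt_nhds (hfpos M))
  filter_upwards [h1, self_mem_nhdsWithin] with ε hε hε0
  exact le_Qinv hfa hf0 hε0 hε

end Qinv

lemma quantile_ratio {f g : ℝ → ℝ} {β : ℝ} (hβ : 0 < β)
    (hfa : Antitone f) (hga : Antitone g)
    (hfpos : ∀ x, 0 < f x) (hgpos : ∀ x, 0 < g x)
    (hf0 : Tendsto f atTop (𝓝 0)) (hg0 : Tendsto g atTop (𝓝 0))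
    (hgRV : RegVary g (-β))
    (hfg : Tendsto (fun x => f x / g x) atTop (𝓝 1)) :
    Tendsto (fun ε => Qinv f ε / Qinv g ε) (𝓝[>] (0:ℝ)) (𝓝 1) := by
  have hgf : Tendsto (fun x => g x / f x) atTop (𝓝 1) := by
    have := hfg.inv₀ one_ne_zero
    simp only [inv_one] at this
    refine this.congr fun x => ?_
    rw [inv_div]
  have hQf := Qinv_atTop hfa hfpos hf0
  have hQg := Qinv_atTop hga hgpos hg0
  -- key comparison
  have key : ∀ t : ℝ, 1 < t →
      (∀ᶠ ε in 𝓝[>] (0:ℝ), Qinv f ε ≤ t * Qinv g ε + t ∧ Qinv g ε ≤ t * Qinv f ε + t) := by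
    intro t ht
    have htpos : (0:ℝ) < t := by linarith
    have htb : t ^ (-β) < 1 := Real.rpow_lt_one_of_one_lt_of_neg ht (by linarith)
    -- choose δ
    obtain ⟨δ, hδ0, hδ⟩ : ∃ δ : ℝ, 0 < δ ∧ (1 + δ) * (t ^ (-β) + δ) < 1 := by
      have hcont : Tendsto (fun δ : ℝ => (1 + δ) * (t ^ (-β) + δ)) (𝓝[>] 0)
          (𝓝 ((1 + 0) * (t ^ (-β) + 0))) :=
        ((continuous_const.add continuous_id).mul (continuous_const.add continuous_id)).tendsto'
          0 _ rfl |>.mono_left nhdsWithin_le_nhds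
      have h1 : ∀ᶠ δ in 𝓝[>] (0:ℝ), (1 + δ) * (t ^ (-β) + δ) < 1 :=
        hcont.eventually (eventually_lt_nhds (by simpa using htb))
      obtain ⟨δ, h, h0⟩ := (h1.and self_mem_nhdsWithin).exists
      exact ⟨δ, h0, h⟩
    have hc1 : t ^ (-β) + δ ≤ 1 := by nlinarith
    -- eventual inequalities in x
    have e1 : ∀ᶠ x in atTop, f x ≤ (1 + δ) * g x := by
      filter_upwards [hfg.eventually (eventually_lt_nhds (by linarith : (1:ℝ) < 1 + δ))] with x hx
      have := hgpos x
      rw [div_lt_iff₀ this] at hx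
      linarith
    have e2 : ∀ᶠ x in atTop, g x ≤ (1 + δ) * f x := by
      filter_upwards [hgf.eventually (eventually_lt_nhds (by linarith : (1:ℝ) < 1 + δ))] with x hx
      have := hfpos x
      rw [div_lt_iff₀ this] at hx
      linarith
    have e3 : ∀ᶠ x in atTop, g (t * x) ≤ (t ^ (-β) + δ) * g x := by
      filter_upwards [(hgRV t htpos).eventually
        (eventually_lt_nhds (by linarith : t ^ (-β) < t ^ (-β) + δ))] with x hx
      have := hgpos x
      rw [div_lt_iff₀ this] at hx
      linarith
    obtain ⟨x₀, hx₀⟩ := (((e1.and e2).and e3).and (eventually_ge_atTop (0:ℝ))).exists_forall_of_atTop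
    have hx₀0 : 0 ≤ x₀ := (hx₀ x₀ le_rfl).2
    filter_upwards [self_mem_nhdsWithin, hQf.eventually (eventually_ge_atTop x₀),
      hQg.eventually (eventually_ge_atTop x₀)] with ε hε0 hQfε hQgε
    have hε0' : (0:ℝ) < ε := hε0
    constructor
    · -- Qf ≤ t Qg + t
      set x := Qinv g ε + 1 with hxdef
      have hxge : x₀ ≤ x := by linarith
      have hx0 : 0 ≤ x := le_trans hx₀0 hxge
      have htx : x₀ ≤ t * x := le_trans hxge (le_mul_of_one_le_left hx0 ht.le)
      have hgx : g x ≤ ε := Qinv_mem hga hg0 hε0' one_pos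
      have h1 := (hx₀ (t*x) htx).1.1.1  -- f (t*x) ≤ (1+δ) g (t*x)... need at point t*x as base
      have h3 := (hx₀ x hxge).1.2       -- g (t*x) ≤ (c+δ) g x
      have hftx : f (t * x) ≤ ε := by
        have hgtx : 0 < g (t*x) := hgpos _
        calc f (t * x) ≤ (1 + δ) * g (t * x) := h1
          _ ≤ (1 + δ) * ((t ^ (-β) + δ) * g x) := by
              have := hgpos x
              nlinarith
          _ ≤ 1 * g x := by
              have := hgpos x
              nlinarith
          _ ≤ ε := by linarith [hgx]
      have hle := Qinv_le_of_mem hftx (by positivity)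
      have hx' : t * x = t * Qinv g ε + t := by rw [hxdef]; ring
      linarith [hle, hx'.le]
    · set x := Qinv f ε + 1 with hxdef
      have hxge : x₀ ≤ x := by linarith
      have hx0 : 0 ≤ x := le_trans hx₀0 hxge
      have hfx : f x ≤ ε := Qinv_mem hfa hf0 hε0' one_pos
      have h2 := (hx₀ x hxge).1.1.2     -- g x ≤ (1+δ) f x
      have h3 := (hx₀ x hxge).1.2       -- g (t*x) ≤ (c+δ) g x
      have hgtx : g (t * x) ≤ ε := by
        have := hfpos x
        have := hgpos x
        calc g (t * x) ≤ (t ^ (-β) + δ) * g x := h3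
          _ ≤ (t ^ (-β) + δ) * ((1 + δ) * f x) := by
              have hc0 : 0 < t ^ (-β) + δ := by positivity
              nlinarith
          _ ≤ 1 * f x := by nlinarith
          _ ≤ ε := by linarith [hfx]
      have hle := Qinv_le_of_mem hgtx (by positivity)
      have hx' : t * x = t * Qinv f ε + t := by rw [hxdef]; ring
      linarith [hle, hx'.le]
  -- conclude
  rw [tendsto_order]
  constructor
  · intro a ha
    set c := max a 0 with hc
    have hc1 : c < 1 := max_lt ha one_pos
    have hc0 : 0 ≤ c := le_max_right _ _
    set r := (c + 1) / 2 with hr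
    have hr0 : 0 < r := by positivity
    have hr1 : r < 1 := by rw [hr]; linarith
    have hcr : c < r := by rw [hr]; linarith
    set t := 1 / r with htdef
    have ht1 : 1 < t := by rw [htdef]; rw [lt_div_iff₀ hr0]; linarith
    have hlow : Tendsto (fun ε => r - 1 / Qinv g ε) (𝓝[>] (0:ℝ)) (𝓝 (r - 0)) :=
      tendsto_const_nhds.sub (tendsto_const_nhds.div_atTop hQg)
    have hev : ∀ᶠ ε in 𝓝[>] (0:ℝ), a < r - 1 / Qinv g ε :=
      hlow.eventually (eventually_gt_nhds (by simpa using lt_of_le_of_lt (le_max_left a 0) hcr))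
    filter_upwards [key t ht1, hev, hQf.eventually (eventually_ge_atTop 1),
      hQg.eventually (eventually_ge_atTop 1)] with ε hkey hev hf1 hg1
    have hQgpos : (0:ℝ) < Qinv g ε := by linarith
    have hQfpos : (0:ℝ) < Qinv f ε := by linarith
    have h2 := hkey.2  -- Qg ≤ t Qf + t
    have hbound : r - 1 / Qinv g ε ≤ Qinv f ε / Qinv g ε := by
      rw [le_div_iff₀ hQgpos]
      have h2' : r * Qinv g ε ≤ Qinv f ε + 1 := by
        have hmul := mul_le_mul_of_nonneg_left h2 hr0.le
        calc r * Qinv g ε ≤ r * (t * Qinv f ε + t) := hmul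
          _ = Qinv f ε + 1 := by rw [htdef]; field_simp
      have hexp : (r - 1 / Qinv g ε) * Qinv g ε = r * Qinv g ε - 1 := by field_simp
      linarith
    linarith [hbound, hev]
  · intro b hb
    set t := (1 + b) / 2 with htdef
    have ht1 : 1 < t := by rw [htdef]; linarith
    have htb : t < b := by rw [htdef]; linarith
    have hup : Tendsto (fun ε => t + t / Qinv g ε) (𝓝[>] (0:ℝ)) (𝓝 (t + 0)) :=
      tendsto_const_nhds.add (tendsto_const_nhds.div_atTop hQg)
    have hev : ∀ᶠ ε in 𝓝[>] (0:ℝ), t + t / Qinv g ε < b :=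
      hup.eventually (eventually_lt_nhds (by simpa using htb))
    filter_upwards [key t ht1, hev, hQg.eventually (eventually_ge_atTop 1)] with ε hkey hev hg1
    have hQgpos : (0:ℝ) < Qinv g ε := by linarith
    have h1 := hkey.1
    have hbound : Qinv f ε / Qinv g ε ≤ t + t / Qinv g ε := by
      rw [div_le_iff₀ hQgpos]
      have hexp : (t + t / Qinv g ε) * Qinv g ε = t * Qinv g ε + t := by field_simp
      linarith
    linarith [hbound, hev]

theorem stmt3 {Ω Ω' : Type*} [MeasurableSpace Ω] [MeasurableSpace Ω']
    (P : Measure Ω) [IsProbabilityMeasure P] (P' : Measure Ω') [IsProbabilityMeasure P']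
    (L S : Ω → ℝ) (U : Ω' → ℝ) (hL : Measurable L) (hS : Measurable S) (hU : Measurable U)
    (hLpos : ∀ ω, 0 ≤ L ω) (hSpos : ∀ ω, 0 ≤ S ω)
    (β : ℝ) (hβ : 0 < β)
    (hRVL : RegVary (tail P L) (-β)) (hRVS : RegVary (tail P S) (-β))
    (hjoint : Tendsto (fun x => (P {ω | x < L ω ∧ x < S ω}).toReal / (tail P L x + tail P S x))
      atTop (𝓝 0))
    (hUcdf : ∀ x, cdf' P' U x = (cdf' P L x + cdf' P S x) / 2) :
    Tendsto (fun α => VaR P (fun ω => L ω + S ω) α / VaR P' U (1 - (1 - α) / 2))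
      (𝓝[<] (1 : ℝ)) (𝓝 1) := by
  set a := tail P L with ha
  set b := tail P S with hb
  have haanti : Antitone a := tail_antitone P
  have hbanti : Antitone b := tail_antitone P
  have hapos : ∀ x, 0 < a x := pos_of_regVary haanti (fun x => tail_nonneg P x) hβ hRVL
  have hbpos : ∀ x, 0 < b x := pos_of_regVary hbanti (fun x => tail_nonneg P x) hβ hRVS
  set T : ℝ → ℝ := fun x => a x + b x with hT
  have hTanti : Antitone T := fun u v huv => add_le_add (haanti huv) (hbanti huv)
  have hTpos : ∀ x, 0 < T x := fun x => add_pos (hapos x) (hbpos x)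
  have hTRV : RegVary T (-β) := regVary_add hapos hbpos hRVL hRVS
  have hT0 : Tendsto T atTop (𝓝 0) := by
    have := (tail_tendsto_zero P hL).add (tail_tendsto_zero P hS)
    simpa [hT] using this
  set H := tail P (fun ω => L ω + S ω) with hH
  have hHanti : Antitone H := tail_antitone P
  have hH0 : Tendsto H atTop (𝓝 0) := tail_tendsto_zero P (hL.add hS)
  have hHge : ∀ x, a x ≤ H x := by
    intro x
    apply ENNReal.toReal_mono (measure_ne_top _ _)
    exact measure_mono fun ω h => lt_of_lt_of_le h (le_add_of_nonneg_right (hSpos ω))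
  have hHpos : ∀ x, 0 < H x := fun x => lt_of_lt_of_le (hapos x) (hHge x)
  set J : ℝ → ℝ := fun x => (P {ω | x < L ω ∧ x < S ω}).toReal with hJ
  have hJT : Tendsto (fun x => J x / T x) atTop (𝓝 0) := by
    simp only [hJ, hT]
    exact hjoint
  -- lower bound : T x ≤ H x + J x
  have hlow : ∀ x, T x ≤ H x + J x := by
    intro x
    have hsub : {ω | x < L ω} ∪ {ω | x < S ω} ⊆ {ω | x < L ω + S ω} := by
      rintro ω (h | h)
      · exact lt_of_lt_of_le h (le_add_of_nonneg_right (hSpos ω))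
      · exact lt_of_lt_of_le h (le_add_of_nonneg_left (hLpos ω))
    have hid : {ω | x < L ω} ∩ {ω | x < S ω} = {ω | x < L ω ∧ x < S ω} := rfl
    have hineq : P {ω | x < L ω} + P {ω | x < S ω}
        ≤ P {ω | x < L ω + S ω} + P {ω | x < L ω ∧ x < S ω} := by
      rw [← measure_union_add_inter _ (measurableSet_lt measurable_const hS), hid]
      exact add_le_add_left (measure_mono hsub) _
    have h2 := ENNReal.toReal_mono
      (ENNReal.add_ne_top.2 ⟨measure_ne_top _ _, measure_ne_top _ _⟩) hineq
    rw [ENNReal.toReal_add (measure_ne_top _ _) (measure_ne_top _ _),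
      ENNReal.toReal_add (measure_ne_top _ _) (measure_ne_top _ _)] at h2
    exact h2
  -- upper bound
  have hup : ∀ s : ℝ, s < 1 → ∀ x, H x ≤ T (s * x) + J ((1 - s) * x) := by
    intro s hs1 x
    have hsub : {ω | x < L ω + S ω} ⊆ ({ω | s * x < L ω} ∪ {ω | s * x < S ω}) ∪
        {ω | (1 - s) * x < L ω ∧ (1 - s) * x < S ω} := by
      intro ω hω
      simp only [Set.mem_union, Set.mem_setOf_eq] at *
      by_cases h1 : s * x < L ω
      · exact Or.inl (Or.inl h1)
      by_cases h2 : s * x < S ω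
      · exact Or.inl (Or.inr h2)
      push_neg at h1 h2
      exact Or.inr ⟨by linarith, by linarith⟩
    have hineq : P {ω | x < L ω + S ω} ≤
        (P {ω | s * x < L ω} + P {ω | s * x < S ω}) + P {ω | (1-s)*x < L ω ∧ (1-s)*x < S ω} :=
      le_trans (measure_mono hsub)
        (le_trans (measure_union_le _ _) (add_le_add_left (measure_union_le _ _) _))
    have h2 := ENNReal.toReal_mono (by
      exact ENNReal.add_ne_top.2 ⟨ENNReal.add_ne_top.2 ⟨measure_ne_top _ _, measure_ne_top _ _⟩,
        measure_ne_top _ _⟩) hineq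
    rw [ENNReal.toReal_add (ENNReal.add_ne_top.2 ⟨measure_ne_top _ _, measure_ne_top _ _⟩)
      (measure_ne_top _ _),
      ENNReal.toReal_add (measure_ne_top _ _) (measure_ne_top _ _)] at h2
    exact h2
  -- H/T → 1
  have hHT : Tendsto (fun x => H x / T x) atTop (𝓝 1) := by
    rw [tendsto_order]
    constructor
    · intro c hc
      have h1 : Tendsto (fun x => 1 - J x / T x) atTop (𝓝 (1 - 0)) :=
        tendsto_const_nhds.sub hJT
      filter_upwards [h1.eventually (eventually_gt_nhds (by simpa using hc))] with x hx
      have hTx := hTpos x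
      have hdiv : 1 - J x / T x ≤ H x / T x := by
        have hstep : T x - J x ≤ H x := by linarith [hlow x]
        calc 1 - J x / T x = (T x - J x) / T x := by field_simp
          _ ≤ H x / T x := by gcongr
      linarith
    · intro c hc
      set m := (1 + c) / 2 with hm
      have hm1 : 1 < m := by rw [hm]; linarith
      have hmc : m < c := by rw [hm]; linarith
      obtain ⟨s, ⟨hs0, hs1⟩, hsm⟩ : ∃ s : ℝ, (0 < s ∧ s < 1) ∧ s ^ (-β) < m := by
        have hcont : Tendsto (fun s : ℝ => s ^ (-β)) (𝓝[<] (1:ℝ)) (𝓝 1) := by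
          have hca : ContinuousAt (fun s : ℝ => s ^ (-β)) 1 :=
            Real.continuousAt_rpow_const 1 (-β) (Or.inl one_ne_zero)
          have := hca.tendsto.mono_left (nhdsWithin_le_nhds (s := Set.Iio (1:ℝ)))
          simpa [Real.one_rpow] using this
        have h1 := hcont.eventually (eventually_lt_nhds hm1)
        have h2 : ∀ᶠ s in 𝓝[<] (1:ℝ), 0 < s :=
          eventually_nhdsWithin_of_eventually_nhds (eventually_gt_nhds one_pos)
        have h3 : ∀ᶠ s in 𝓝[<] (1:ℝ), s < 1 := by
          filter_upwards [self_mem_nhdsWithin] with s hs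
          exact hs
        obtain ⟨s, hs⟩ := ((h2.and h3).and h1).exists
        exact ⟨s, hs.1, hs.2⟩
      have hε0 : (0:ℝ) < 1 - s := by linarith
      have hterm1 : Tendsto (fun x => T (s * x) / T x) atTop (𝓝 (s ^ (-β))) := hTRV s hs0
      have hterm2 : Tendsto (fun x => J ((1 - s) * x) / T x) atTop (𝓝 0) := by
        have hmulatop : Tendsto (fun x : ℝ => (1 - s) * x) atTop atTop :=
          tendsto_id.const_mul_atTop hε0
        have hA : Tendsto (fun x => J ((1 - s) * x) / T ((1 - s) * x)) atTop (𝓝 0) :=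
          hJT.comp hmulatop
        have hB := hTRV (1 - s) hε0
        have hAB := hA.mul hB
        rw [zero_mul] at hAB
        refine hAB.congr fun x => ?_
        have h1 := (hTpos ((1 - s) * x)).ne'
        field_simp
      have hsum : Tendsto (fun x => T (s * x) / T x + J ((1 - s) * x) / T x) atTop
          (𝓝 (s ^ (-β) + 0)) := hterm1.add hterm2
      have hlt : s ^ (-β) + 0 < c := by rw [add_zero]; linarith
      filter_upwards [hsum.eventually (eventually_lt_nhds hlt)] with x hx
      have hTx := hTpos x
      have hdiv : H x / T x ≤ T (s * x) / T x + J ((1 - s) * x) / T x := by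
        rw [← add_div]
        gcongr
        exact hup s hs1 x
      linarith
  -- identify VaRs
  have hVaR1 : ∀ α : ℝ, VaR P (fun ω => L ω + S ω) α = Qinv H (1 - α) := by
    intro α
    unfold VaR Qinv
    congr 1
    ext x
    have h := cdf'_add_tail P (X := fun ω => L ω + S ω) (hL.add hS) x
    rw [← hH] at h
    simp only [Set.mem_setOf_eq]
    constructor <;> intro h' <;> linarith
  have hVaR2 : ∀ α : ℝ, VaR P' U (1 - (1 - α) / 2) = Qinv T (1 - α) := by
    intro α
    unfold VaR Qinv
    congr 1
    ext x
    have hLx := cdf'_add_tail P hL x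
    have hSx := cdf'_add_tail P hS x
    rw [← ha] at hLx
    rw [← hb] at hSx
    have hTx : T x = a x + b x := by rw [hT]
    simp only [Set.mem_setOf_eq, hUcdf x]
    constructor <;> intro h' <;> linarith
  have key := quantile_ratio hβ hHanti hTanti hHpos hTpos hH0 hT0 hTRV hHT
  have hmap : Tendsto (fun α : ℝ => 1 - α) (𝓝[<] (1:ℝ)) (𝓝[>] (0:ℝ)) := by
    apply tendsto_nhdsWithin_of_tendsto_nhds_of_eventually_within
    · have h1 : Tendsto (fun α : ℝ => 1 - α) (𝓝 1) (𝓝 (1 - 1)) :=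
        ((continuous_const.sub continuous_id).tendsto 1)
      have := h1.mono_left (nhdsWithin_le_nhds (s := Set.Iio (1:ℝ)))
      simpa using this
    · filter_upwards [self_mem_nhdsWithin] with α hα
      simp only [Set.mem_Iio] at hα
      simp only [Set.mem_Ioi]
      linarith
  have hcomp := key.comp hmap
  refine hcomp.congr fun α => ?_
  simp only [Function.comp_apply]
  rw [hVaR1 α, hVaR2 α]
end

section
/- Let U \in RV_{-\beta} be a non-negative random variable with positive, non-increasing, continuous density f_U on [x_0,\infty), let S be a non-negative random variable independent of U, and let g be a measurable function with 0 < a \le g(s) \le b. Define L = g(S)U. Then the conditional density of L given S = s equals f_L(x | S = s) = f_U(x/g(s))/g(s), and for any compact set K \subset (0,1], ess sup_{s \ge 0} sup_{t \in K} | f_L(tx | S = s)/f_L(x | S = s) - t^{-\beta - 1} | \to 0 as x \to \infty. -/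
open MeasureTheory ProbabilityTheory Filter Topology

lemma aux_choose_t (β : ℝ) (hβ : 0 < β) (ε : ℝ) (hε : 0 < ε) :
    ∃ t : ℝ, 0 < t ∧ t < 1 ∧ (t ^ (-β) - 1) / (1 - t) ≤ β + ε ∧
      β - ε ≤ (1 - t ^ β) / (t⁻¹ - 1) := by
  have hd1 : HasDerivAt (fun s : ℝ => s ^ (-β)) (-β) 1 := by
    have := Real.hasDerivAt_rpow_const (x := (1:ℝ)) (p := -β) (Or.inl one_ne_zero)
    simpa using this
  have hd2 : HasDerivAt (fun s : ℝ => s ^ (β)) (β) 1 := by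
    have := Real.hasDerivAt_rpow_const (x := (1:ℝ)) (p := β) (Or.inl one_ne_zero)
    simpa using this
  have hs1 : Tendsto (fun s : ℝ => (s ^ (-β) - 1) / (s - 1)) (𝓝[≠] 1) (𝓝 (-β)) := by
    have := hasDerivAt_iff_tendsto_slope.mp hd1
    refine this.congr fun s => ?_
    simp [slope_def_field, Real.one_rpow, div_eq_div_iff]
  have hs2 : Tendsto (fun s : ℝ => (s ^ β - 1) / (s - 1)) (𝓝[≠] 1) (𝓝 β) := by
    have := hasDerivAt_iff_tendsto_slope.mp hd2
    refine this.congr fun s => ?_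
    simp [slope_def_field, Real.one_rpow, div_eq_div_iff]
  -- restrict to 𝓝[<] 1
  have hmono : 𝓝[<] (1:ℝ) ≤ 𝓝[≠] 1 := nhdsWithin_mono 1 fun s hs => ne_of_lt hs
  have h1 : Tendsto (fun s : ℝ => (s ^ (-β) - 1) / (1 - s)) (𝓝[<] 1) (𝓝 β) := by
    have : Tendsto (fun s : ℝ => -((s ^ (-β) - 1) / (s - 1))) (𝓝[<] 1) (𝓝 (-(-β))) :=
      ((hs1.mono_left hmono)).neg
    simpa using this.congr fun s => by
      rw [← neg_div, neg_div, ← div_neg, neg_sub]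
  have h2 : Tendsto (fun s : ℝ => s * ((s ^ β - 1) / (s - 1))) (𝓝[<] 1) (𝓝 β) := by
    have hid : Tendsto (fun s : ℝ => s) (𝓝[<] 1) (𝓝 1) :=
      tendsto_id.mono_left nhdsWithin_le_nhds
    simpa using hid.mul (hs2.mono_left hmono)
  have hev1 : ∀ᶠ s in 𝓝[<] (1:ℝ), (s ^ (-β) - 1) / (1 - s) ≤ β + ε :=
    (h1.eventually (eventually_le_nhds (by linarith)))
  have hev2 : ∀ᶠ s in 𝓝[<] (1:ℝ), β - ε ≤ s * ((s ^ β - 1) / (s - 1)) :=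
    (h2.eventually (eventually_ge_nhds (by linarith)))
  have hev3 : ∀ᶠ s in 𝓝[<] (1:ℝ), s ∈ Set.Ioo (0:ℝ) 1 :=
    Ioo_mem_nhdsLT_of_mem (by constructor <;> norm_num)
  obtain ⟨t, h₁, h₂, h₃⟩ := (hev1.and (hev2.and hev3)).exists
  refine ⟨t, h₃.1, h₃.2, h₁, ?_⟩
  have ht0 : (0:ℝ) < t := h₃.1
  have ht1 : t < 1 := h₃.2
  have hinv : t⁻¹ - 1 = (1 - t) / t := by field_simp
  have key : t * ((t ^ β - 1) / (t - 1)) = (1 - t ^ β) / (t⁻¹ - 1) := by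
    rw [hinv, div_div_eq_mul_div,
      show (t ^ β - 1) / (t - 1) = (1 - t ^ β) / (1 - t) by
        rw [← neg_div_neg_eq]; ring_nf]
    ring
  rw [← key]; exact h₂

lemma key_r (x₀ β : ℝ) (hx₀ : 0 < x₀) (hβ : 0 < β) (fU T : ℝ → ℝ)
    (hfUpos : ∀ x, x₀ ≤ x → 0 < fU x)
    (hfUmono : ∀ x y, x₀ ≤ x → x ≤ y → fU y ≤ fU x)
    (hfUint : ∀ u v, x₀ ≤ u → x₀ ≤ v → IntervalIntegrable fU volume u v)
    (hTnonneg : ∀ x, 0 ≤ T x)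
    (hTdiff : ∀ u v, x₀ ≤ u → u ≤ v → T u - T v = ∫ y in u..v, fU y)
    (hRV : ∀ t : ℝ, 0 < t → Tendsto (fun x => T (t * x) / T x) atTop (𝓝 (t ^ (-β)))) :
    Tendsto (fun x => x * fU x / T x) atTop (𝓝 β) := by
  have hTpos : ∀ x, x₀ ≤ x → 0 < T x := by
    intro x hx
    have hint := hfUint x (x + 1) hx (by linarith)
    have hpos : 0 < ∫ y in x..x + 1, fU y :=
      intervalIntegral.intervalIntegral_pos_of_pos_on hint
        (fun y hy => hfUpos y (le_trans hx hy.1.le)) (by linarith)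
    have hd := hTdiff x (x + 1) hx (by linarith)
    linarith [hTnonneg (x + 1)]
  rw [Metric.tendsto_atTop]
  intro ε hε
  obtain ⟨t, ht0, ht1, hb1, hb2⟩ := aux_choose_t β hβ (ε / 4) (by positivity)
  have ht1' : (0:ℝ) < 1 - t := by linarith
  have hti : (1:ℝ) < t⁻¹ := one_lt_inv₀ ht0 |>.mpr ht1
  have hti' : (0:ℝ) < t⁻¹ - 1 := by linarith
  set ε₁ := min (ε / 4 * (1 - t)) (ε / 4 * (t⁻¹ - 1)) with hε₁def
  have hε₁ : 0 < ε₁ := lt_min (by positivity) (by positivity)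
  have hpow : (t⁻¹ : ℝ) ^ (-β) = t ^ β := by
    rw [Real.inv_rpow ht0.le, Real.rpow_neg ht0.le, inv_inv]
  have hA : ∀ᶠ x in atTop, |T (t * x) / T x - t ^ (-β)| < ε₁ := by
    have h := hRV t ht0
    rw [Metric.tendsto_nhds] at h
    simpa [Real.dist_eq] using h ε₁ hε₁
  have hB : ∀ᶠ x in atTop, |T (t⁻¹ * x) / T x - t ^ β| < ε₁ := by
    have h := hRV t⁻¹ (by positivity)
    rw [Metric.tendsto_nhds] at h
    simpa [Real.dist_eq, hpow] using h ε₁ hε₁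
  have hC : ∀ᶠ x in atTop, max (x₀ / t) 1 ≤ x := eventually_ge_atTop _
  rw [← eventually_atTop]
  filter_upwards [hA, hB, hC] with x hAx hBx hCx
  have hx1 : x₀ / t ≤ x := le_trans (le_max_left _ _) hCx
  have hx2 : (1:ℝ) ≤ x := le_trans (le_max_right _ _) hCx
  have hx0 : (0:ℝ) < x := by linarith
  have htx : x₀ ≤ t * x := by rw [div_le_iff₀ ht0] at hx1; linarith [hx1]; 
  have hxx : x₀ ≤ x := by
    have : x₀ ≤ x₀ / t := by rw [le_div_iff₀ ht0]; nlinarith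
    linarith
  have hxi : x ≤ t⁻¹ * x := by nlinarith
  have htxx : t * x ≤ x := by nlinarith
  have hxix0 : x₀ ≤ t⁻¹ * x := le_trans hxx hxi
  have hTx : 0 < T x := hTpos x hxx
  have hTtx : 0 < T (t * x) := hTpos _ htx
  have hfx : 0 < fU x := hfUpos x hxx
  -- integral comparisons
  have ineq1 : (x - t * x) * fU x ≤ T (t * x) - T x := by
    have hd := hTdiff (t * x) x htx htxx
    have hmon : ∫ y in t * x..x, (fun _ => fU x) y ≤ ∫ y in t * x..x, fU y :=
      intervalIntegral.integral_mono_on htxx intervalIntegrable_const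
        (hfUint _ _ htx hxx) (fun y hy => hfUmono y x (le_trans htx hy.1) hy.2)
    rw [intervalIntegral.integral_const, smul_eq_mul] at hmon
    linarith
  have ineq2 : T x - T (t⁻¹ * x) ≤ (t⁻¹ * x - x) * fU x := by
    have hd := hTdiff x (t⁻¹ * x) hxx hxi
    have hmon : ∫ y in x..t⁻¹ * x, fU y ≤ ∫ y in x..t⁻¹ * x, (fun _ => fU x) y :=
      intervalIntegral.integral_mono_on hxi (hfUint _ _ hxx hxix0)
        intervalIntegrable_const (fun y hy => hfUmono x y hxx hy.1)
    rw [intervalIntegral.integral_const, smul_eq_mul] at hmon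
    linarith
  have hA' : T (t * x) ≤ (t ^ (-β) + ε₁) * T x := by
    have h1 : T (t * x) / T x < t ^ (-β) + ε₁ := by
      have := lt_of_abs_lt hAx; linarith
    exact le_of_lt ((div_lt_iff₀ hTx).mp h1)
  have hB' : T (t⁻¹ * x) ≤ (t ^ β + ε₁) * T x := by
    have h1 : T (t⁻¹ * x) / T x < t ^ β + ε₁ := by
      have := lt_of_abs_lt hBx; linarith
    exact le_of_lt ((div_lt_iff₀ hTx).mp h1)
  have hb1' : t ^ (-β) - 1 ≤ (β + ε / 4) * (1 - t) := by
    rw [div_le_iff₀ ht1'] at hb1; linarith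
  have hb2' : (β - ε / 4) * (t⁻¹ - 1) ≤ 1 - t ^ β := by
    rw [le_div_iff₀ hti'] at hb2; linarith
  have hm1 : ε₁ ≤ ε / 4 * (1 - t) := min_le_left _ _
  have hm2 : ε₁ ≤ ε / 4 * (t⁻¹ - 1) := min_le_right _ _
  -- upper bound
  have upper : x * fU x ≤ (β + ε / 2) * T x := by
    have s1 : (1 - t) * (x * fU x) ≤ (t ^ (-β) + ε₁ - 1) * T x := by
      have e : (1 - t) * (x * fU x) = (x - t * x) * fU x := by ring
      have e2 : (t ^ (-β) + ε₁ - 1) * T x = (t ^ (-β) + ε₁) * T x - T x := by ring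
      rw [e, e2]; linarith
    have s2 : (t ^ (-β) + ε₁ - 1) ≤ (β + ε / 2) * (1 - t) := by
      have e : (β + ε / 4) * (1 - t) + ε / 4 * (1 - t) = (β + ε / 2) * (1 - t) := by ring
      linarith
    have s3 : (t ^ (-β) + ε₁ - 1) * T x ≤ ((β + ε / 2) * (1 - t)) * T x :=
      mul_le_mul_of_nonneg_right s2 hTx.le
    have s4 : (1 - t) * (x * fU x) ≤ (1 - t) * ((β + ε / 2) * T x) := by
      calc (1 - t) * (x * fU x) ≤ ((β + ε / 2) * (1 - t)) * T x := le_trans s1 s3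
        _ = (1 - t) * ((β + ε / 2) * T x) := by ring
    exact le_of_mul_le_mul_left s4 ht1'
  have lower : (β - ε / 2) * T x ≤ x * fU x := by
    have s1 : (1 - t ^ β - ε₁) * T x ≤ (t⁻¹ - 1) * (x * fU x) := by
      have e : (t⁻¹ - 1) * (x * fU x) = (t⁻¹ * x - x) * fU x := by ring
      have e2 : (1 - t ^ β - ε₁) * T x = T x - (t ^ β + ε₁) * T x := by ring
      rw [e, e2]; linarith
    have s2 : (β - ε / 2) * (t⁻¹ - 1) ≤ 1 - t ^ β - ε₁ := by
      have e : (β - ε / 4) * (t⁻¹ - 1) - ε / 4 * (t⁻¹ - 1) = (β - ε / 2) * (t⁻¹ - 1) := by ring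
      linarith
    have s3 : ((β - ε / 2) * (t⁻¹ - 1)) * T x ≤ (1 - t ^ β - ε₁) * T x :=
      mul_le_mul_of_nonneg_right s2 hTx.le
    have s4 : (t⁻¹ - 1) * ((β - ε / 2) * T x) ≤ (t⁻¹ - 1) * (x * fU x) := by
      calc (t⁻¹ - 1) * ((β - ε / 2) * T x) = ((β - ε / 2) * (t⁻¹ - 1)) * T x := by ring
        _ ≤ (1 - t ^ β - ε₁) * T x := s3
        _ ≤ (t⁻¹ - 1) * (x * fU x) := s1
    exact le_of_mul_le_mul_left s4 hti'
  rw [Real.dist_eq, abs_lt]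
  have hdiv1 : x * fU x / T x ≤ β + ε / 2 := (div_le_iff₀ hTx).mpr upper
  have hdiv2 : β - ε / 2 ≤ x * fU x / T x := (le_div_iff₀ hTx).mpr lower
  constructor <;> linarith

lemma ratio_pointwise (x₀ β : ℝ) (hx₀ : 0 < x₀) (hβ : 0 < β) (fU T : ℝ → ℝ)
    (hfUpos : ∀ x, x₀ ≤ x → 0 < fU x)
    (hTpos : ∀ x, x₀ ≤ x → 0 < T x)
    (hr : Tendsto (fun x => x * fU x / T x) atTop (𝓝 β))
    (hRV : ∀ t : ℝ, 0 < t → Tendsto (fun x => T (t * x) / T x) atTop (𝓝 (t ^ (-β))))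
    (t : ℝ) (ht0 : 0 < t) (ht1 : t ≤ 1) :
    Tendsto (fun x => fU (t * x) / fU x) atTop (𝓝 (t ^ (-β - 1))) := by
  have hcomp : Tendsto (fun x => (t * x) * fU (t * x) / T (t * x)) atTop (𝓝 β) :=
    hr.comp (tendsto_id.const_mul_atTop ht0)
  have hG : Tendsto (fun x => ((t * x) * fU (t * x) / T (t * x)) / (x * fU x / T x)
      * (T (t * x) / T x) * t⁻¹) atTop (𝓝 ((β / β) * t ^ (-β) * t⁻¹)) :=
    ((hcomp.div hr hβ.ne').mul (hRV t ht0)).mul_const t⁻¹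
  have hlim : (β / β) * t ^ (-β) * t⁻¹ = t ^ (-β - 1) := by
    rw [div_self hβ.ne', one_mul, Real.rpow_sub ht0, Real.rpow_one, div_eq_mul_inv]
  rw [hlim] at hG
  apply hG.congr'
  filter_upwards [eventually_ge_atTop (max (x₀ / t) 1)] with x hx
  have hx1 : x₀ / t ≤ x := le_trans (le_max_left _ _) hx
  have hx2 : (1:ℝ) ≤ x := le_trans (le_max_right _ _) hx
  have hx0 : (0:ℝ) < x := by linarith
  have htx : x₀ ≤ t * x := by rw [div_le_iff₀ ht0] at hx1; linarith
  have hxx : x₀ ≤ x := by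
    have : x₀ ≤ x₀ / t := by rw [le_div_iff₀ ht0]; nlinarith
    linarith
  have h1 : 0 < fU x := hfUpos x hxx
  have h2 : 0 < fU (t * x) := hfUpos _ htx
  have h3 : 0 < T x := hTpos x hxx
  have h4 : 0 < T (t * x) := hTpos _ htx
  field_simp

lemma unif_ratio (x₀ β : ℝ) (hx₀ : 0 < x₀) (hβ : 0 < β) (fU : ℝ → ℝ)
    (hfUpos : ∀ x, x₀ ≤ x → 0 < fU x)
    (hfUmono : ∀ x y, x₀ ≤ x → x ≤ y → fU y ≤ fU x)
    (hratio : ∀ t : ℝ, 0 < t → t ≤ 1 →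
      Tendsto (fun x => fU (t * x) / fU x) atTop (𝓝 (t ^ (-β - 1))))
    (δ : ℝ) (hδ0 : 0 < δ) (hδ1 : δ ≤ 1) (ε : ℝ) (hε : 0 < ε) :
    ∃ Y₀ : ℝ, ∀ y ≥ Y₀, ∀ t ∈ Set.Icc δ 1, |fU (t * y) / fU y - t ^ (-β - 1)| ≤ ε := by
  set h : ℝ → ℝ := fun s => s ^ (-β - 1) with hh
  -- h is antitone on positives
  have hanti : ∀ s u : ℝ, 0 < s → s ≤ u → h u ≤ h s := fun s u hs hsu =>
    Real.rpow_le_rpow_of_nonpos hs hsu (by linarith)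
  -- uniform continuity on Icc δ 1
  have hcont : ContinuousOn h (Set.Icc δ 1) := by
    apply ContinuousOn.rpow_const continuousOn_id
    intro s hs; exact Or.inl (ne_of_gt (lt_of_lt_of_le hδ0 hs.1))
  have huc := (isCompact_Icc.uniformContinuousOn_of_continuous hcont)
  rw [Metric.uniformContinuousOn_iff] at huc
  obtain ⟨η, hη, hucη⟩ := huc (ε / 3) (by positivity)
  -- grid
  set n : ℕ := ⌈(1 - δ) / η⌉₊ + 1 with hn
  have hn0 : 0 < (n:ℝ) := by positivity
  set step : ℝ := (1 - δ) / n with hstep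
  have hδ1' : (0:ℝ) ≤ 1 - δ := by linarith
  have hstep0 : 0 ≤ step := by positivity
  have hstepη : step < η := by
    have h1 : (1 - δ) / η ≤ ⌈(1 - δ) / η⌉₊ := Nat.le_ceil _
    have h2 : (1 - δ) / η < n := by
      rw [hn]; push_cast; linarith
    rw [hstep, div_lt_iff₀ hn0]
    rw [div_lt_iff₀ hη] at h2
    linarith [h2]
  set grid : ℕ → ℝ := fun i => δ + i * step with hgrid
  have hgridn : grid n = 1 := by
    simp only [hgrid, hstep]
    field_simp
    ring
  have hgrid_mem : ∀ i : ℕ, i ≤ n → grid i ∈ Set.Icc δ 1 := by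
    intro i hi
    constructor
    · simp only [hgrid]
      have : 0 ≤ (i:ℝ) * step := by positivity
      linarith
    · rw [← hgridn]; simp only [hgrid]
      have : (i:ℝ) ≤ n := by exact_mod_cast hi
      nlinarith
  have hgrid_pos : ∀ i : ℕ, i ≤ n → 0 < grid i ∧ grid i ≤ 1 := fun i hi =>
    ⟨lt_of_lt_of_le hδ0 (hgrid_mem i hi).1, (hgrid_mem i hi).2⟩
  -- pointwise convergence at grid points
  have hptw : ∀ᶠ y in atTop,
      (∀ i ∈ Finset.range (n + 1), |fU (grid i * y) / fU y - h (grid i)| < ε / 3) := by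
    rw [eventually_all_finset]
    intro i hi
    rw [Finset.mem_range] at hi
    have hgi := hgrid_pos i (Nat.lt_succ_iff.mp hi)
    have := hratio (grid i) hgi.1 hgi.2
    rw [Metric.tendsto_nhds] at this
    simpa [Real.dist_eq] using this (ε / 3) (by positivity)
  have hev := hptw.and (eventually_ge_atTop (max (x₀ / δ) 1))
  rw [eventually_atTop] at hev
  obtain ⟨Y₀, hY₀⟩ := hev
  refine ⟨Y₀, fun y hy t ht => ?_⟩
  obtain ⟨hpt, hylarge⟩ := hY₀ y hy
  have hyδ : x₀ / δ ≤ y := le_trans (le_max_left _ _) hylarge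
  have hy1 : (1:ℝ) ≤ y := le_trans (le_max_right _ _) hylarge
  have hy0 : (0:ℝ) < y := by linarith
  have hδy : x₀ ≤ δ * y := by rw [div_le_iff₀ hδ0] at hyδ; linarith
  have hyy : x₀ ≤ y := by
    have : x₀ ≤ x₀ / δ := by rw [le_div_iff₀ hδ0]; nlinarith
    linarith
  have hfy : 0 < fU y := hfUpos y hyy
  -- monotonicity of F
  have hFmono : ∀ s u : ℝ, δ ≤ s → s ≤ u → fU (u * y) / fU y ≤ fU (s * y) / fU y := by
    intro s u hs hsu
    have harg : fU (u * y) ≤ fU (s * y) :=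
      hfUmono (s * y) (u * y) (le_trans hδy (by nlinarith)) (by nlinarith)
    exact div_le_div_of_nonneg_right harg hfy.le
  -- find the grid cell containing t
  have hcell : ∃ i : ℕ, i + 1 ≤ n ∧ grid i ≤ t ∧ t ≤ grid (i + 1) := by
    rcases eq_or_lt_of_le hstep0 with hs0 | hs0
    · -- step = 0, so δ = 1 and t = 1
      have hδeq : δ = 1 := by
        have : (1 - δ) = 0 := by
          by_contra hne
          have : 0 < (1 - δ) / n := by
            rcases lt_or_gt_of_ne hne with h | h
            · linarith
            · positivity
          rw [← hstep] at this; linarith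
        linarith
      have ht1' : t = 1 := le_antisymm ht.2 (hδeq ▸ ht.1)
      refine ⟨0, by omega, ?_, ?_⟩ <;>
        simp [hgrid, ← hs0, hδeq, ht1']
    · -- step > 0
      set j : ℕ := ⌊(t - δ) / step⌋₊ with hj
      have htδ : 0 ≤ t - δ := by linarith [ht.1]
      have hfl : (j:ℝ) ≤ (t - δ) / step := Nat.floor_le (by positivity)
      have hfl2 : (t - δ) / step < j + 1 := Nat.lt_floor_add_one _
      by_cases hjn : j ≤ n - 1
      · refine ⟨j, by omega, ?_, ?_⟩
        · simp only [hgrid]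
          rw [le_div_iff₀ hs0] at hfl
          linarith
        · simp only [hgrid]
          rw [div_lt_iff₀ hs0] at hfl2
          push_cast
          linarith
      · refine ⟨n - 1, by omega, ?_, ?_⟩
        · simp only [hgrid]
          have hnj : (n:ℝ) ≤ j := by
            have : n ≤ j := by omega
            exact_mod_cast this
          rw [le_div_iff₀ hs0] at hfl
          have hcast : ((n - 1 : ℕ) : ℝ) = (n:ℝ) - 1 := by
            have : 1 ≤ n := by omega
            push_cast [this]; ring
          rw [hcast]
          nlinarith [hstep0]
        · have hcast : ((n - 1 + 1 : ℕ) : ℝ) = (n:ℝ) := by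
            have : 1 ≤ n := by omega
            push_cast [this]; ring
          have : grid (n - 1 + 1) = 1 := by
            have : n - 1 + 1 = n := by omega
            rw [this, hgridn]
          rw [this]; exact ht.2
  obtain ⟨i, hin, hit, hti⟩ := hcell
  have hgi := hgrid_mem i (by omega)
  have hgi1 := hgrid_mem (i + 1) hin
  have hti0 : 0 < grid i := lt_of_lt_of_le hδ0 hgi.1
  have ht0 : 0 < t := lt_of_lt_of_le hδ0 ht.1
  -- grid spacing bound
  have hspace : |h (grid i) - h (grid (i + 1))| < ε / 3 := by
    have hd : dist (grid i) (grid (i + 1)) < η := by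
      rw [Real.dist_eq]
      simp only [hgrid]
      push_cast
      rw [show δ + (i:ℝ) * step - (δ + ((i:ℝ) + 1) * step) = -step by ring, abs_neg,
        abs_of_nonneg hstep0]
      exact hstepη
    have := hucη _ hgi _ hgi1 hd
    rwa [Real.dist_eq] at this
  -- pointwise bounds at grid points
  have hbi : |fU (grid i * y) / fU y - h (grid i)| < ε / 3 :=
    hpt i (Finset.mem_range.mpr (by omega))
  have hbi1 : |fU (grid (i + 1) * y) / fU y - h (grid (i + 1))| < ε / 3 :=
    hpt (i + 1) (Finset.mem_range.mpr (by omega))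
  -- monotonicity chains
  have hup : fU (t * y) / fU y ≤ fU (grid i * y) / fU y := hFmono _ _ hgi.1 hit
  have hdown : fU (grid (i + 1) * y) / fU y ≤ fU (t * y) / fU y := hFmono _ _ ht.1 hti
  have hh1 : h (grid (i + 1)) ≤ h t := hanti _ _ ht0 hti
  have hh2 : h t ≤ h (grid i) := hanti _ _ hti0 hit
  have e1 := abs_lt.mp hspace
  have e2 := abs_lt.mp hbi
  have e3 := abs_lt.mp hbi1
  rw [abs_le]
  constructor <;> linarith

lemma tail_split {Ω : Type*} [MeasurableSpace Ω] (P : Measure Ω) [IsProbabilityMeasure P]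
    (U : Ω → ℝ) (hU : Measurable U) (x y : ℝ) (hxy : x ≤ y) :
    tail P U x - tail P U y = cdf' P U y - cdf' P U x := by
  have hmB : MeasurableSet {ω | y < U ω} := hU measurableSet_Ioi
  have hmA : MeasurableSet {ω | x < U ω ∧ U ω ≤ y} := (hU measurableSet_Ioi).inter (hU measurableSet_Iic)
  have h1 : {ω | x < U ω} = {ω | y < U ω} ∪ {ω | x < U ω ∧ U ω ≤ y} := by
    ext ω; simp only [Set.mem_setOf_eq, Set.mem_union]
    constructor
    · intro h
      by_cases hy : U ω ≤ y
      · exact Or.inr ⟨h, hy⟩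
      · exact Or.inl (lt_of_not_ge hy)
    · rintro (h | h)
      · exact lt_of_le_of_lt hxy h
      · exact h.1
  have h2 : {ω | U ω ≤ y} = {ω | U ω ≤ x} ∪ {ω | x < U ω ∧ U ω ≤ y} := by
    ext ω; simp only [Set.mem_setOf_eq, Set.mem_union]
    constructor
    · intro h
      by_cases hx : U ω ≤ x
      · exact Or.inl hx
      · exact Or.inr ⟨lt_of_not_ge hx, h⟩
    · rintro (h | h)
      · exact le_trans h hxy
      · exact h.2
  have hd1 : Disjoint {ω | y < U ω} {ω | x < U ω ∧ U ω ≤ y} := by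
    rw [Set.disjoint_left]; intro ω h1 h2; exact absurd h2.2 (not_le.mpr h1)
  have hd2 : Disjoint {ω | U ω ≤ x} {ω | x < U ω ∧ U ω ≤ y} := by
    rw [Set.disjoint_left]; intro ω h1 h2; exact absurd h1 (not_le.mpr h2.1)
  have e1 : P {ω | x < U ω} = P {ω | y < U ω} + P {ω | x < U ω ∧ U ω ≤ y} := by
    rw [h1, measure_union hd1 hmA]
  have e2 : P {ω | U ω ≤ y} = P {ω | U ω ≤ x} + P {ω | x < U ω ∧ U ω ≤ y} := by
    rw [h2, measure_union hd2 hmA]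
  simp only [tail, cdf', e1, e2, ENNReal.toReal_add (measure_ne_top P _) (measure_ne_top P _)]
  ring

theorem stmt15 {Ω : Type*} [MeasurableSpace Ω] (P : Measure Ω) [IsProbabilityMeasure P]
    (U S : Ω → ℝ) (hU : Measurable U) (hS : Measurable S)
    (hindep : IndepFun U S P)
    (hUpos : ∀ ω, 0 ≤ U ω) (hSpos : ∀ ω, 0 ≤ S ω)
    (g : ℝ → ℝ) (hg : Measurable g) (a b : ℝ) (ha : 0 < a)
    (hgab : ∀ s, a ≤ g s ∧ g s ≤ b)
    (β x₀ : ℝ) (hβ : 0 < β) (hx₀ : 0 < x₀)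
    (hRVU : RegVary (tail P U) (-β))
    (fU : ℝ → ℝ)
    (hfUpos : ∀ x, x₀ ≤ x → 0 < fU x)
    (hfUmono : ∀ x y, x₀ ≤ x → x ≤ y → fU y ≤ fU x)
    (hfUcont : ContinuousOn fU (Set.Ici x₀))
    (hfUdens : ∀ x, x₀ ≤ x → cdf' P U x = cdf' P U x₀ + ∫ y in x₀..x, fU y) :
    -- the conditional density of L = g(S)U given S = s is fU (x / g s) / g s ...
    (∀ s x : ℝ, x₀ * b ≤ x →
      (P {ω | g s * U ω ≤ x}).toReal =
        (P {ω | g s * U ω ≤ x₀ * b}).toReal + ∫ y in (x₀ * b)..x, fU (y / g s) / g s) ∧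
    -- ... and the uniform (essential supremum) regular-variation condition holds
    (∀ K : Set ℝ, K ⊆ Set.Ioc 0 1 → IsCompact K → ∀ ε > 0, ∃ X₀ : ℝ, ∀ x ≥ X₀,
      ∀ᵐ s ∂(P.map S), ∀ t ∈ K,
        |(fU (t * x / g s) / g s) / (fU (x / g s) / g s) - t ^ (-β - 1)| ≤ ε) := by

  have hb : 0 < b := lt_of_lt_of_le ha (le_trans (hgab 0).1 (hgab 0).2)
  have hfUint : ∀ u v, x₀ ≤ u → x₀ ≤ v → IntervalIntegrable fU volume u v := by
    intro u v hu hv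
    apply ContinuousOn.intervalIntegrable
    apply hfUcont.mono
    intro z hz
    rcases Set.mem_uIcc.mp hz with h | h
    · exact le_trans hu h.1
    · exact le_trans hv h.1
  constructor
  · -- Part 1: conditional density formula
    intro s x hx
    have hc : 0 < g s := lt_of_lt_of_le ha (hgab s).1
    have hcb : g s ≤ b := (hgab s).2
    have hset : ∀ z : ℝ, {ω | g s * U ω ≤ z} = {ω | U ω ≤ z / g s} := by
      intro z; ext ω
      simp only [Set.mem_setOf_eq, le_div_iff₀ hc, mul_comm]
    have h1 : x₀ ≤ x₀ * b / g s := by rw [le_div_iff₀ hc]; nlinarith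
    have h2 : x₀ ≤ x / g s := by rw [le_div_iff₀ hc]; nlinarith
    have key : cdf' P U (x / g s) =
        cdf' P U (x₀ * b / g s) + ∫ y in (x₀ * b / g s)..(x / g s), fU y := by
      rw [hfUdens _ h2, hfUdens _ h1]
      have := intervalIntegral.integral_interval_sub_left
        (hfUint x₀ (x / g s) le_rfl h2) (hfUint x₀ (x₀ * b / g s) le_rfl h1)
      linarith
    have hint : (∫ y in (x₀ * b)..x, fU (y / g s) / g s)
        = ∫ y in (x₀ * b / g s)..(x / g s), fU y := by
      rw [intervalIntegral.integral_div, intervalIntegral.integral_comp_div fU hc.ne',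
        smul_eq_mul, mul_div_cancel_left₀ _ hc.ne']
    simp only [cdf'] at key
    rw [hset x, hset (x₀ * b), hint]
    exact key
  · -- Part 2: uniform regular variation of the conditional density ratio
    have hTdiff : ∀ u v, x₀ ≤ u → u ≤ v → tail P U u - tail P U v = ∫ y in u..v, fU y := by
      intro u v hu huv
      rw [tail_split P U hU u v huv, hfUdens _ (le_trans hu huv), hfUdens _ hu]
      have := intervalIntegral.integral_interval_sub_left
        (hfUint x₀ v le_rfl (le_trans hu huv)) (hfUint x₀ u le_rfl hu)
      linarith
    have hTnonneg : ∀ x, 0 ≤ tail P U x := fun x => ENNReal.toReal_nonneg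
    have hTpos : ∀ x, x₀ ≤ x → 0 < tail P U x := by
      intro x hx
      have hint := hfUint x (x + 1) hx (by linarith)
      have hpos : 0 < ∫ y in x..x + 1, fU y :=
        intervalIntegral.intervalIntegral_pos_of_pos_on hint
          (fun y hy => hfUpos y (le_trans hx hy.1.le)) (by linarith)
      have hd := hTdiff x (x + 1) hx (by linarith)
      linarith [hTnonneg (x + 1)]
    have hr := key_r x₀ β hx₀ hβ fU (tail P U) hfUpos hfUmono hfUint hTnonneg hTdiff hRVU
    have hratio : ∀ t : ℝ, 0 < t → t ≤ 1 →
        Tendsto (fun x => fU (t * x) / fU x) atTop (𝓝 (t ^ (-β - 1))) :=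
      fun t ht0 ht1 => ratio_pointwise x₀ β hx₀ hβ fU (tail P U) hfUpos hTpos hr hRVU t ht0 ht1
    intro K hK hKc ε hε
    rcases K.eq_empty_or_nonempty with rfl | hKe
    · exact ⟨0, fun x hx => ae_of_all _ (fun s t ht => absurd ht (Set.notMem_empty t))⟩
    have hδK : sInf K ∈ K := hKc.sInf_mem hKe
    have hδIoc := hK hδK
    obtain ⟨Y₀, hY₀⟩ := unif_ratio x₀ β hx₀ hβ fU hfUpos hfUmono hratio
      (sInf K) hδIoc.1 hδIoc.2 ε hε
    refine ⟨b * max Y₀ 0 + 1, fun x hx => ae_of_all _ (fun s t ht => ?_)⟩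
    have hgs0 : 0 < g s := lt_of_lt_of_le ha (hgab s).1
    have hgsb : g s ≤ b := (hgab s).2
    have hmax0 : (0:ℝ) ≤ max Y₀ 0 := le_max_right _ _
    have hx0 : 0 ≤ x := by nlinarith [mul_nonneg hb.le hmax0]
    have hxb : Y₀ ≤ x / b := by
      rw [le_div_iff₀ hb]
      nlinarith [mul_le_mul_of_nonneg_left (le_max_left Y₀ (0:ℝ)) hb.le]
    have hxgs : Y₀ ≤ x / g s := le_trans hxb (div_le_div_of_nonneg_left hx0 hgs0 hgsb)
    have hKsub : t ∈ Set.Icc (sInf K) 1 := ⟨csInf_le hKc.bddBelow ht, (hK ht).2⟩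
    have key := hY₀ (x / g s) hxgs t hKsub
    have e1 : t * x / g s = t * (x / g s) := by ring
    have e2 : fU (t * (x / g s)) / g s / (fU (x / g s) / g s)
        = fU (t * (x / g s)) / fU (x / g s) := div_div_div_cancel_right₀ hgs0.ne' _ _
    rw [e1, e2]
    exact key
end
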